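/- For every real number x, the series ∑_{n≥1} μ(n)·B̄_1(nx)²/n² converges absolutely and ∑_{n≥1} μ(n)·B̄_1(nx)²/n² = (1/(2π²))·(1 + 2·cos(2πx)). -/

import Mathlib

/-- The periodized Bernoulli polynomial `B̄ₘ(x) = Bₘ({x})`. -/
noncomputable def bernPer (m : ℕ) (x : ℝ) : ℝ :=
  ((Polynomial.bernoulli m).map (algebraMap ℚ ℝ)).eval (Int.fract x)

open Real ArithmeticFunction

lemma bernPer_one (y : ℝ) : bernPer 1 y = Int.fract y - 1/2 := by
  simp [bernPer, Polynomial.bernoulli, Finset.sum_range_succ, bernoulli_one]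
  ring

lemma bern_cos (y : ℝ) :
    HasSum (fun k : ℕ => Real.cos (2 * π * (k + 1) * y) / ((k : ℝ) + 1) ^ 2)
      (π ^ 2 * (bernPer 1 y ^ 2 - 1 / 12)) := by
  have hx : Int.fract y ∈ Set.Icc (0:ℝ) 1 :=
    ⟨Int.fract_nonneg y, (Int.fract_lt_one y).le⟩
  have H := hasSum_one_div_nat_pow_mul_cos (k := 1) one_ne_zero hx
  have hval : (-1 : ℝ) ^ (1 + 1) * (2 * π) ^ (2 * 1) / 2 / ((2 * 1).factorial : ℝ) *
      (Polynomial.map (algebraMap ℚ ℝ) (Polynomial.bernoulli (2 * 1))).eval (Int.fract y)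
      = π ^ 2 * (bernPer 1 y ^ 2 - 1 / 12) := by
    have h2 : (Polynomial.map (algebraMap ℚ ℝ) (Polynomial.bernoulli 2)).eval (Int.fract y)
        = Int.fract y ^ 2 - Int.fract y + 1/6 := by
      simp [Polynomial.bernoulli, Finset.sum_range_succ, bernoulli_one,
        bernoulli_eq_bernoulli'_of_ne_one, bernoulli'_two]
      ring
    rw [bernPer_one]
    norm_num [h2]
    ring
  rw [hval] at H
  have hfun : ∀ n : ℕ, Real.cos (2 * π * n * Int.fract y) = Real.cos (2 * π * n * y) := by
    intro n
    have : 2 * π * n * Int.fract y = 2 * π * n * y - (n * ⌊y⌋ : ℤ) * (2 * π) := by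
      rw [Int.fract]
      push_cast
      ring
    rw [this, Real.cos_sub_int_mul_two_pi]
  have H' : HasSum (fun n : ℕ => 1 / (n : ℝ) ^ (2 * 1) * Real.cos (2 * π * n * y))
      (π ^ 2 * (bernPer 1 y ^ 2 - 1 / 12)) := by
    refine H.congr_fun fun n => by rw [hfun]
  set a := π ^ 2 * (bernPer 1 y ^ 2 - 1 / 12) with ha
  set f := fun n : ℕ => 1 / (n : ℝ) ^ (2 * 1) * Real.cos (2 * π * n * y) with hf
  have h0 : HasSum f (a + ∑ i ∈ Finset.range 1, f i) := by
    simpa [hf] using H'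
  have H'' := (hasSum_nat_add_iff (f := f) 1).mpr h0
  refine H''.congr_fun fun k => ?_
  simp only [hf]
  push_cast
  ring


lemma moe_div_sum (n : ℕ) (hn : n ≠ 0) :
    ∑ p ∈ n.divisorsAntidiagonal, (moebius p.1 : ℤ) = if n = 1 then 1 else 0 := by
  have h := congrArg (fun f : ArithmeticFunction ℤ => f n) moebius_mul_coe_zeta
  simp only [mul_apply, one_apply] at h
  rw [← h]
  refine Finset.sum_congr rfl fun p hp => ?_
  obtain ⟨-, h2⟩ := Nat.ne_zero_of_mem_divisorsAntidiagonal hp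
  simp [natCoe_apply, zeta_apply, h2]

set_option maxHeartbeats 1000000 in
lemma keyL (h : ℕ → ℝ) (hb : ∀ n, |h n| ≤ 1) :
    HasSum (fun p : ℕ × ℕ => (moebius (p.1 + 1) : ℝ) * h ((p.1 + 1) * (p.2 + 1)) /
      (((p.1 + 1) * (p.2 + 1) : ℕ) : ℝ) ^ 2) (h 1) := by
  set F' : ℕ × ℕ → ℝ := fun p =>
    if p.1 = 0 ∨ p.2 = 0 then 0 else (moebius p.1 : ℝ) * h (p.1 * p.2) / ((p.1 * p.2 : ℕ) : ℝ) ^ 2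
    with hF'
  set F : ℕ × ℕ → ℝ := fun p => (moebius (p.1 + 1) : ℝ) * h ((p.1 + 1) * (p.2 + 1)) /
      (((p.1 + 1) * (p.2 + 1) : ℕ) : ℝ) ^ 2 with hF
  -- summability
  have hsq : Summable fun n : ℕ => 1 / ((n : ℝ) + 1) ^ 2 := by
    have := (summable_nat_add_iff (f := fun n : ℕ => 1 / (n : ℝ) ^ 2) 1).mpr
      (Real.summable_one_div_nat_pow.mpr one_lt_two)
    refine this.congr fun n => by push_cast; ring
  have hG : Summable fun p : ℕ × ℕ => (1 / ((p.1 : ℝ) + 1) ^ 2) * (1 / ((p.2 : ℝ) + 1) ^ 2) :=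
    hsq.mul_of_nonneg hsq (fun n => by positivity) (fun n => by positivity)
  have hbound : ∀ p : ℕ × ℕ, |F p| ≤ (1 / ((p.1 : ℝ) + 1) ^ 2) * (1 / ((p.2 : ℝ) + 1) ^ 2) := by
    intro p
    have h1 : |(moebius (p.1 + 1) : ℝ)| ≤ 1 := by
      have := abs_moebius_le_one (n := p.1 + 1)
      exact_mod_cast (by exact_mod_cast this : |((moebius (p.1+1) : ℤ) : ℝ)| ≤ 1)
    have h2 := hb ((p.1 + 1) * (p.2 + 1))
    rw [hF, abs_div, abs_mul]
    have hpos : (0:ℝ) < (((p.1 + 1) * (p.2 + 1) : ℕ) : ℝ) ^ 2 := by positivity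
    rw [abs_of_pos hpos]
    calc |(moebius (p.1 + 1) : ℝ)| * |h ((p.1 + 1) * (p.2 + 1))| /
          (((p.1 + 1) * (p.2 + 1) : ℕ) : ℝ) ^ 2
        ≤ 1 * 1 / (((p.1 + 1) * (p.2 + 1) : ℕ) : ℝ) ^ 2 := by
          gcongr
      _ = (1 / ((p.1 : ℝ) + 1) ^ 2) * (1 / ((p.2 : ℝ) + 1) ^ 2) := by
          push_cast; field_simp
  have hFsummable : Summable F :=
    Summable.of_abs (hG.of_nonneg_of_le (fun p => abs_nonneg _) hbound)
  -- transfer to F'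
  have hj : Function.Injective (fun p : ℕ × ℕ => (p.1 + 1, p.2 + 1)) := by
    intro p q hpq
    simp only [Prod.mk.injEq, Prod.ext_iff] at hpq ⊢
    omega
  have hcomp : ∀ p : ℕ × ℕ, F' ((fun p : ℕ × ℕ => (p.1 + 1, p.2 + 1)) p) = F p := by
    intro p; simp [hF', hF]
  have hzero : ∀ q : ℕ × ℕ, q ∉ Set.range (fun p : ℕ × ℕ => (p.1 + 1, p.2 + 1)) → F' q = 0 := by
    intro q hq
    rw [hF']
    rcases q with ⟨a, b⟩
    rcases Nat.eq_zero_or_pos a with rfl | ha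
    · simp
    rcases Nat.eq_zero_or_pos b with rfl | hbp
    · simp
    exact absurd ⟨(a - 1, b - 1), by simp; omega⟩ hq
  have hFs : HasSum F (∑' p, F p) := hFsummable.hasSum
  have hF's : HasSum F' (∑' p, F p) := by
    rw [← hj.hasSum_iff hzero]
    exact hFs.congr_fun fun p => (hcomp p).symm
  -- fiberwise over the multiplication map
  have hfib := hF's.tsum_fiberwise (fun p => p.1 * p.2)
  have hfibval : ∀ n : ℕ, (∑' (p : (fun p : ℕ × ℕ => p.1 * p.2) ⁻¹' {n}), F' p.val)
      = if n = 1 then h 1 else 0 := by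
    intro n
    rcases eq_or_ne n 0 with rfl | hn
    · have : ∀ p : (fun p : ℕ × ℕ => p.1 * p.2) ⁻¹' {(0:ℕ)}, F' p.val = 0 := by
        rintro ⟨⟨a, b⟩, hp⟩
        simp only [Set.mem_preimage, Set.mem_singleton_iff, Nat.mul_eq_zero] at hp
        rcases hp with rfl | rfl <;> simp [hF']
      simp [this]
    · have hset : (fun p : ℕ × ℕ => p.1 * p.2) ⁻¹' {n} = ↑n.divisorsAntidiagonal := by
        ext p; simp [Nat.mem_divisorsAntidiagonal, hn, eq_comm]
      rw [hset, Finset.tsum_subtype' n.divisorsAntidiagonal F']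
      have hterm : ∀ p ∈ n.divisorsAntidiagonal, F' p = (moebius p.1 : ℝ) * (h n / (n : ℝ) ^ 2) := by
        intro p hp
        obtain ⟨h1, h2⟩ := Nat.ne_zero_of_mem_divisorsAntidiagonal hp
        have hmul := (Nat.mem_divisorsAntidiagonal.mp hp).1
        simp only [hF']
        rw [if_neg (by push_neg; exact ⟨h1, h2⟩), hmul]
        ring
      rw [Finset.sum_congr rfl hterm, ← Finset.sum_mul]
      have : (∑ p ∈ n.divisorsAntidiagonal, (moebius p.1 : ℝ)) =
          ((∑ p ∈ n.divisorsAntidiagonal, (moebius p.1 : ℤ) : ℤ) : ℝ) := by push_cast; ring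
      rw [this, moe_div_sum n hn]
      rcases eq_or_ne n 1 with rfl | h1
      · simp
      · simp [h1]
  have hind : HasSum (fun n : ℕ => if n = 1 then h 1 else 0) (∑' p, F p) := by
    refine hfib.congr_fun fun n => (hfibval n).symm
  have : (∑' p, F p) = h 1 := (hasSum_ite_eq 1 (h 1)).unique hind |>.symm
  rwa [this] at hFs

theorem stmt6 (x : ℝ) :
    (Summable fun n : ℕ =>
      |(ArithmeticFunction.moebius (n + 1) : ℝ) * bernPer 1 ((n + 1) * x) ^ 2 / (n + 1) ^ 2|) ∧
    ∑' n : ℕ, (ArithmeticFunction.moebius (n + 1) : ℝ) * bernPer 1 ((n + 1) * x) ^ 2 / (n + 1) ^ 2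
      = 1 / (2 * Real.pi ^ 2) * (1 + 2 * Real.cos (2 * Real.pi * x)) := by
  have hpi : (π : ℝ) ≠ 0 := Real.pi_ne_zero
  -- double sums
  have hcosL : HasSum (fun p : ℕ × ℕ => (moebius (p.1 + 1) : ℝ) *
      Real.cos (2 * π * (((p.1 + 1) * (p.2 + 1) : ℕ) : ℝ) * x) /
      (((p.1 + 1) * (p.2 + 1) : ℕ) : ℝ) ^ 2) (Real.cos (2 * π * x)) := by
    have := keyL (fun n => Real.cos (2 * π * n * x)) (fun n => abs_cos_le_one _)
    simpa using this
  have honeL : HasSum (fun p : ℕ × ℕ => (moebius (p.1 + 1) : ℝ) * 1 /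
      (((p.1 + 1) * (p.2 + 1) : ℕ) : ℝ) ^ 2) 1 := by
    have := keyL (fun _ => (1 : ℝ)) (fun n => by norm_num)
    simpa using this
  -- inner sums
  have hinner : ∀ n : ℕ, HasSum (fun k : ℕ => (moebius (n + 1) : ℝ) *
      Real.cos (2 * π * (((n + 1) * (k + 1) : ℕ) : ℝ) * x) / (((n + 1) * (k + 1) : ℕ) : ℝ) ^ 2)
      ((moebius (n + 1) : ℝ) * (π ^ 2 * (bernPer 1 (((n : ℝ) + 1) * x) ^ 2 - 1 / 12)) /
        ((n : ℝ) + 1) ^ 2) := by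
    intro n
    have B := (bern_cos (((n : ℝ) + 1) * x)).mul_left ((moebius (n + 1) : ℝ) / ((n : ℝ) + 1) ^ 2)
    have heq : ∀ k : ℕ, (moebius (n + 1) : ℝ) / ((n : ℝ) + 1) ^ 2 *
        (Real.cos (2 * π * (k + 1) * (((n : ℝ) + 1) * x)) / ((k : ℝ) + 1) ^ 2)
        = (moebius (n + 1) : ℝ) * Real.cos (2 * π * (((n + 1) * (k + 1) : ℕ) : ℝ) * x) /
          (((n + 1) * (k + 1) : ℕ) : ℝ) ^ 2 := by
      intro k
      have harg : 2 * π * ((k : ℝ) + 1) * (((n : ℝ) + 1) * x)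
          = 2 * π * (((n + 1) * (k + 1) : ℕ) : ℝ) * x := by push_cast; ring
      rw [harg]
      push_cast
      rw [div_mul_div_comm, ← mul_pow]
    have hval : (moebius (n + 1) : ℝ) / ((n : ℝ) + 1) ^ 2 *
        (π ^ 2 * (bernPer 1 (((n : ℝ) + 1) * x) ^ 2 - 1 / 12))
        = (moebius (n + 1) : ℝ) * (π ^ 2 * (bernPer 1 (((n : ℝ) + 1) * x) ^ 2 - 1 / 12)) /
          ((n : ℝ) + 1) ^ 2 := by ring
    rw [hval] at B
    exact B.congr_fun fun k => (heq k).symm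
  have A : HasSum (fun n : ℕ => (moebius (n + 1) : ℝ) *
      (π ^ 2 * (bernPer 1 (((n : ℝ) + 1) * x) ^ 2 - 1 / 12)) / ((n : ℝ) + 1) ^ 2)
      (Real.cos (2 * π * x)) :=
    HasSum.prod_fiberwise hcosL hinner
  -- ones
  have hZ : HasSum (fun k : ℕ => 1 / ((k : ℝ) + 1) ^ 2) (π ^ 2 / 6) := by
    have h0 : HasSum (fun k : ℕ => 1 / ((k : ℝ)) ^ 2)
        (π ^ 2 / 6 + ∑ i ∈ Finset.range 1, 1 / ((i : ℝ)) ^ 2) := by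
      simpa using hasSum_zeta_two
    have := (hasSum_nat_add_iff (f := fun k : ℕ => 1 / ((k : ℝ)) ^ 2) 1).mpr h0
    exact this.congr_fun fun k => by push_cast; ring
  have hinner1 : ∀ n : ℕ, HasSum (fun k : ℕ => (moebius (n + 1) : ℝ) * 1 /
      (((n + 1) * (k + 1) : ℕ) : ℝ) ^ 2)
      ((moebius (n + 1) : ℝ) * (π ^ 2 / 6) / ((n : ℝ) + 1) ^ 2) := by
    intro n
    have B := hZ.mul_left ((moebius (n + 1) : ℝ) / ((n : ℝ) + 1) ^ 2)
    have hval : (moebius (n + 1) : ℝ) / ((n : ℝ) + 1) ^ 2 * (π ^ 2 / 6)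
        = (moebius (n + 1) : ℝ) * (π ^ 2 / 6) / ((n : ℝ) + 1) ^ 2 := by ring
    rw [hval] at B
    refine B.congr_fun fun k => ?_
    push_cast
    rw [div_mul_div_comm, ← mul_pow]
  have B1 : HasSum (fun n : ℕ => (moebius (n + 1) : ℝ) * (π ^ 2 / 6) / ((n : ℝ) + 1) ^ 2) 1 :=
    HasSum.prod_fiberwise honeL hinner1
  -- combine
  have H := (A.mul_left (1 / π ^ 2)).add (B1.mul_left (1 / (2 * π ^ 2)))
  have H' : HasSum (fun n : ℕ => (moebius (n + 1) : ℝ) * bernPer 1 (((n : ℝ) + 1) * x) ^ 2 /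
      ((n : ℝ) + 1) ^ 2) (1 / (2 * π ^ 2) * (1 + 2 * Real.cos (2 * π * x))) := by
    have hfun : ∀ n : ℕ, 1 / π ^ 2 * ((moebius (n + 1) : ℝ) *
        (π ^ 2 * (bernPer 1 (((n : ℝ) + 1) * x) ^ 2 - 1 / 12)) / ((n : ℝ) + 1) ^ 2) +
        1 / (2 * π ^ 2) * ((moebius (n + 1) : ℝ) * (π ^ 2 / 6) / ((n : ℝ) + 1) ^ 2)
        = (moebius (n + 1) : ℝ) * bernPer 1 (((n : ℝ) + 1) * x) ^ 2 / ((n : ℝ) + 1) ^ 2 := by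
      intro n
      have h1 : ((n : ℝ) + 1) ≠ 0 := by positivity
      field_simp
      ring
    have hval : 1 / π ^ 2 * Real.cos (2 * π * x) + 1 / (2 * π ^ 2) * 1
        = 1 / (2 * π ^ 2) * (1 + 2 * Real.cos (2 * π * x)) := by
      field_simp
      ring
    rw [← hval]
    exact H.congr_fun fun n => (hfun n).symm
  constructor
  · -- summability of abs
    have hsq : Summable fun n : ℕ => 1 / ((n : ℝ) + 1) ^ 2 := hZ.summable
    refine hsq.of_nonneg_of_le (fun n => abs_nonneg _) fun n => ?_
    have h1 : |(moebius (n + 1) : ℝ)| ≤ 1 := by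
      exact_mod_cast (by exact_mod_cast abs_moebius_le_one (n := n + 1) :
        |((moebius (n + 1) : ℤ) : ℝ)| ≤ 1)
    have h2 : bernPer 1 (((n : ℝ) + 1) * x) ^ 2 ≤ 1 := by
      rw [bernPer_one]
      nlinarith [Int.fract_nonneg (((n : ℝ) + 1) * x), Int.fract_lt_one (((n : ℝ) + 1) * x)]
    have h2' : (0:ℝ) ≤ bernPer 1 (((n : ℝ) + 1) * x) ^ 2 := sq_nonneg _
    have hpos : (0:ℝ) < ((n : ℝ) + 1) ^ 2 := by positivity
    rw [abs_div, abs_mul, abs_of_pos hpos, abs_of_nonneg h2']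
    calc |(moebius (n + 1) : ℝ)| * (bernPer 1 (((n : ℝ) + 1) * x) ^ 2) / ((n : ℝ) + 1) ^ 2
        ≤ 1 * 1 / ((n : ℝ) + 1) ^ 2 := by gcongr
      _ = 1 / ((n : ℝ) + 1) ^ 2 := by ring
  · exact H'.tsum_eq
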